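/- Let l ≥ 5 be odd. Then 2·K_{l(l−1)/2} cannot be partitioned into copies of the triangular graph T(l). (Proof sketch: such a partition would consist of (l+1)/2 adjacency matrices A_i summing to 2(J−I); each A_i has a (−2)-eigenspace of dimension C(l,2) − l inside the complement of the all-ones vector; the intersection of the first (l−1)/2 of these eigenspaces has positive dimension, and a nonzero vector x in it satisfies A_{(l+1)/2} x = (l−3)x, contradicting that l−3 is not an eigenvalue of T(l) other than on excluded spaces.) -/

import Mathlib

/-- The edge multiset of the multigraph `m·K_V` can be partitioned into copies
of `G`. -/
def CanPartitionMultiKn {V : Type*} (G : SimpleGraph V) (m : ℕ) : Prop :=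
  ∃ (l : ℕ) (H : Fin l → SimpleGraph V),
    (∀ i, Nonempty (H i ≃g G)) ∧
    ∀ u v : V, u ≠ v → Nat.card {i : Fin l // (H i).Adj u v} = m

/-- The triangular graph `T(l)`: the line graph of `K_l`, whose vertices are
the 2-element subsets of an `l`-set, adjacent when they intersect. -/
def triangularGraph (l : ℕ) : SimpleGraph {s : Finset (Fin l) // s.card = 2} where
  Adj a b := a ≠ b ∧ (a.1 ∩ b.1).Nonempty
  symm := by constructor; intro a b h; exact ⟨h.1.symm, by rw [Finset.inter_comm]; exact h.2⟩
  loopless := by constructor; intro a h; exact h.1 rfl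

/-- The vertex type of the triangular graph. -/
abbrev TGV (l : ℕ) := {s : Finset (Fin l) // s.card = 2}

open Finset Matrix

lemma tv_card_contains (l : ℕ) (a : Fin l) :
    (Finset.univ.filter (fun w : TGV l => a ∈ w.1)).card = l - 1 := by
  classical
  rw [← Fintype.card_subtype]
  have e : {x : Fin l // x ≠ a} ≃ {w : TGV l // a ∈ w.1} := by
    refine Equiv.ofBijective
      (fun x => ⟨⟨({a, x.1} : Finset (Fin l)), Finset.card_pair (Ne.symm x.2)⟩,
        Finset.mem_insert_self _ _⟩) ⟨?_, ?_⟩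
    · rintro ⟨x, hx⟩ ⟨y, hy⟩ h
      simp only [Subtype.mk_eq_mk] at h ⊢
      have : x ∈ ({a, y} : Finset (Fin l)) := by rw [← h]; simp
      rcases Finset.mem_insert.mp this with h' | h'
      · exact absurd h' hx
      · exact Finset.mem_singleton.mp h'
    · rintro ⟨⟨s, hs⟩, ha⟩
      obtain ⟨c, d, hcd, rfl⟩ := Finset.card_eq_two.mp hs
      simp only [Finset.mem_insert, Finset.mem_singleton] at ha
      rcases ha with rfl | rfl
      · exact ⟨⟨d, hcd.symm⟩, by simp⟩
      · exact ⟨⟨c, hcd⟩, by simp [Finset.pair_comm]⟩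
  rw [← Fintype.card_congr e]
  simp [Fintype.card_subtype_compl]

lemma tv_card_contains_two (l : ℕ) (a b : Fin l) (hab : a ≠ b) :
    (Finset.univ.filter (fun w : TGV l => a ∈ w.1 ∧ b ∈ w.1)).card = 1 := by
  classical
  rw [Finset.card_eq_one]
  refine ⟨⟨({a, b} : Finset (Fin l)), Finset.card_pair hab⟩, ?_⟩
  apply Finset.eq_singleton_iff_unique_mem.mpr
  refine ⟨by simp, ?_⟩
  rintro ⟨s, hs⟩ hmem
  simp only [Finset.mem_filter] at hmem
  obtain ⟨-, ha, hb⟩ := hmem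
  have hsub : ({a, b} : Finset (Fin l)) ⊆ s := by
    intro x hx; rcases Finset.mem_insert.mp hx with rfl | hx
    · exact ha
    · rw [Finset.mem_singleton.mp hx]; exact hb
  have : ({a, b} : Finset (Fin l)) = s :=
    Finset.eq_of_subset_of_card_le hsub (by rw [hs, Finset.card_pair hab])
  exact Subtype.ext this.symm

lemma tv_inter_card_le (l : ℕ) (w w' : TGV l) (h : w ≠ w') :
    (w.1 ∩ w'.1).card ≤ 1 := by
  by_contra hc
  push_neg at hc
  have h1 : w.1 ∩ w'.1 ⊆ w.1 := Finset.inter_subset_left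
  have h2 : w.1 ∩ w'.1 = w.1 :=
    Finset.eq_of_subset_of_card_le h1 (by omega)
  have h3 : w.1 ⊆ w'.1 := h2 ▸ Finset.inter_subset_right
  exact h (Subtype.ext (Finset.eq_of_subset_of_card_le h3 (by rw [w.2, w'.2])))

theorem triangular_no_double_partition (l : ℕ) (hl : 5 ≤ l) (hodd : Odd l) :
    ¬ CanPartitionMultiKn (triangularGraph l) 2 := by
  classical
  rintro ⟨k, H, hiso, hcount⟩
  let e : ∀ i, H i ≃g triangularGraph l := fun i => (hiso i).some
  let M : Fin k → Matrix (Fin l) (TGV l) ℚ :=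
    fun i => Matrix.of fun a v => if a ∈ (e i v).1 then 1 else 0
  let A : Fin k → Matrix (TGV l) (TGV l) ℚ :=
    fun i => Matrix.of fun u v => if (H i).Adj u v then 1 else 0
  -- indicator sums
  have hind : ∀ s : Finset (Fin l), ∑ a : Fin l, (if a ∈ s then (1:ℚ) else 0) = s.card := by
    intro s; rw [Finset.sum_ite_mem, Finset.univ_inter, Finset.sum_const]; simp
  have hindV : ∀ (p : TGV l → Prop) [DecidablePred p],
      ∑ w : TGV l, (if p w then (1:ℚ) else 0) = (Finset.univ.filter p).card := by
    intro p hp; rw [Finset.sum_boole]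
  have hl1Q : ((l - 1 : ℕ) : ℚ) = (l:ℚ) - 1 := by
    rw [Nat.cast_sub (by omega)]; norm_num
  -- M^T M = A + 2 I
  have hMtM : ∀ i, (M i)ᵀ * M i = A i + (2:ℚ) • (1 : Matrix (TGV l) (TGV l) ℚ) := by
    intro i
    ext u v
    have hcard : ((M i)ᵀ * M i) u v = (((e i u).1 ∩ (e i v).1).card : ℚ) := by
      rw [Matrix.mul_apply, ← hind ((e i u).1 ∩ (e i v).1)]
      apply Finset.sum_congr rfl
      intro a _
      simp only [Matrix.transpose_apply, M, Matrix.of_apply, Finset.mem_inter]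
      by_cases h1 : a ∈ (e i u).1 <;> by_cases h2 : a ∈ (e i v).1 <;> simp [h1, h2]
    rw [hcard]
    simp only [Matrix.add_apply, Matrix.smul_apply, Matrix.one_apply, A, Matrix.of_apply,
      smul_eq_mul]
    by_cases huv : u = v
    · subst huv
      rw [Finset.inter_self, (e i u).2]
      simp [SimpleGraph.irrefl]
    · have hne : e i u ≠ e i v := fun h => huv ((e i).toEquiv.injective h)
      by_cases hadj : (H i).Adj u v
      · have hadj' : (triangularGraph l).Adj (e i u) (e i v) := (e i).map_adj_iff.mpr hadj
        have h1 : 1 ≤ ((e i u).1 ∩ (e i v).1).card := Finset.card_pos.mpr hadj'.2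
        have h2 := tv_inter_card_le l (e i u) (e i v) hne
        have h3 : ((e i u).1 ∩ (e i v).1).card = 1 := le_antisymm h2 h1
        simp [h3, hadj, huv]
      · have hnadj : ¬ (triangularGraph l).Adj (e i u) (e i v) :=
          fun h => hadj ((e i).map_adj_iff.mp h)
        have hempty : (e i u).1 ∩ (e i v).1 = ∅ := by
          by_contra h
          exact hnadj ⟨hne, Finset.nonempty_iff_ne_empty.mpr h⟩
        simp [hempty, hadj, huv]
  -- M M^T entries
  have hMMt : ∀ i a b, (M i * (M i)ᵀ) a b = if a = b then (l:ℚ) - 1 else 1 := by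
    intro i a b
    rw [Matrix.mul_apply]
    have hre : ∑ v : TGV l, M i a v * (M i)ᵀ v b
        = ∑ w : TGV l, (if a ∈ w.1 ∧ b ∈ w.1 then (1:ℚ) else 0) := by
      rw [← Equiv.sum_comp (e i).toEquiv
        (fun w : TGV l => if a ∈ w.1 ∧ b ∈ w.1 then (1:ℚ) else 0)]
      apply Finset.sum_congr rfl
      intro v _
      simp only [Matrix.transpose_apply, M, Matrix.of_apply]
      by_cases h1 : a ∈ (e i v).1 <;> by_cases h2 : b ∈ (e i v).1 <;>
        simp [h1, h2, RelIso.coe_fn_toEquiv]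
    rw [hre, hindV]
    by_cases hab : a = b
    · subst hab
      simp only [and_self]
      rw [tv_card_contains l a, hl1Q]
      simp
    · rw [tv_card_contains_two l a b hab]
      simp [hab]
  -- column sums of M are 2
  have hcol : ∀ i v, ∑ a, M i a v = (2:ℚ) := by
    intro i v
    have h1 : ∑ a, M i a v = (((e i v).1.card : ℕ) : ℚ) := by
      rw [← hind (e i v).1]; rfl
    rw [h1, (e i v).2]; norm_num
  -- row sums of M are l - 1
  have hrow : ∀ i a, ∑ v, M i a v = (l:ℚ) - 1 := by
    intro i a
    have hre : ∑ v : TGV l, M i a v = ∑ w : TGV l, (if a ∈ w.1 then (1:ℚ) else 0) := by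
      rw [← Equiv.sum_comp (e i).toEquiv (fun w : TGV l => if a ∈ w.1 then (1:ℚ) else 0)]
      rfl
    rw [hre, hindV, tv_card_contains l a, hl1Q]
  -- sum over i of A i entries
  have hAsum : ∀ u v : TGV l, ∑ i, A i u v = if u = v then 0 else 2 := by
    intro u v
    by_cases huv : u = v
    · subst huv; simp [A, SimpleGraph.irrefl]
    · simp only [A, Matrix.of_apply]
      rw [Finset.sum_boole]
      have hc : Nat.card {i : Fin k // (H i).Adj u v} = 2 := hcount u v huv
      rw [Nat.card_eq_fintype_card, Fintype.card_subtype] at hc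
      rw [hc]
      simp [huv]
  -- 2 * card = l * (l-1)
  have h2n : 2 * Fintype.card (TGV l) = l * (l - 1) := by
    have h1 : ∑ w : TGV l, (w.1.card) = 2 * Fintype.card (TGV l) := by
      rw [Finset.sum_congr rfl (fun w _ => w.2), Finset.sum_const, Finset.card_univ,
        smul_eq_mul, mul_comm]
    have h2 : ∑ w : TGV l, (w.1.card) = l * (l - 1) := by
      have hw : ∀ w : TGV l, w.1.card = ∑ a : Fin l, if a ∈ w.1 then 1 else 0 := by
        intro w; rw [Finset.sum_ite_mem, Finset.univ_inter]; simp
      rw [Finset.sum_congr rfl (fun w _ => hw w), Finset.sum_comm]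
      have h3 : ∀ a : Fin l, ∑ w : TGV l, (if a ∈ w.1 then 1 else 0) = l - 1 := by
        intro a
        rw [Finset.sum_boole, tv_card_contains l a]; simp
      rw [Finset.sum_congr rfl (fun a _ => h3 a), Finset.sum_const, Finset.card_univ,
        Fintype.card_fin, smul_eq_mul]
    omega
  have hnge : 2 ≤ Fintype.card (TGV l) := by
    have h20 : 5 * 4 ≤ l * (l - 1) := Nat.mul_le_mul hl (by omega)
    omega
  have hnQ : 2 * ((Fintype.card (TGV l) : ℚ)) = (l:ℚ) * ((l:ℚ) - 1) := by
    have hc := congrArg (Nat.cast : ℕ → ℚ) h2n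
    push_cast [hl1Q] at hc
    linarith [hc]
  -- number of copies: 2k = l + 1
  obtain ⟨u₀⟩ : Nonempty (TGV l) := Fintype.card_pos_iff.mp (by omega)
  have hArow : ∀ i, ∑ v, A i u₀ v = 2 * (l:ℚ) - 4 := by
    intro i
    have h1 : ∑ v, ((M i)ᵀ * M i) u₀ v = (∑ v, A i u₀ v) + 2 := by
      rw [Finset.sum_congr rfl (fun v _ => by rw [hMtM i] :
        ∀ v ∈ Finset.univ, ((M i)ᵀ * M i) u₀ v
          = (A i + (2:ℚ) • (1 : Matrix (TGV l) (TGV l) ℚ)) u₀ v)]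
      erw [Finset.sum_congr rfl (fun v _ => Matrix.add_apply (A i) _ u₀ v)]
      simp only [Matrix.smul_apply, Matrix.one_apply, smul_eq_mul]
      rw [Finset.sum_add_distrib]
      congr 1
      rw [Finset.sum_congr rfl (fun v _ => by split <;> simp :
        ∀ v ∈ Finset.univ, (2:ℚ) * (if u₀ = v then 1 else 0) = if u₀ = v then 2 else 0)]
      rw [Finset.sum_ite_eq]
      simp
    have h2 : ∑ v, ((M i)ᵀ * M i) u₀ v = ((l:ℚ) - 1) * 2 := by
      simp only [Matrix.mul_apply, Matrix.transpose_apply]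
      rw [Finset.sum_comm]
      calc ∑ a, ∑ v, M i a u₀ * M i a v
          = ∑ a, M i a u₀ * ((l:ℚ) - 1) := by
            refine Finset.sum_congr rfl fun a _ => ?_
            rw [← Finset.mul_sum, hrow i a]
        _ = ((l:ℚ) - 1) * ∑ a, M i a u₀ := by rw [← Finset.sum_mul, mul_comm]
        _ = ((l:ℚ) - 1) * 2 := by rw [hcol i u₀]
    linarith
  have hk : 2 * k = l + 1 := by
    have h1 : ∑ i, ∑ v, A i u₀ v = (k:ℚ) * (2 * (l:ℚ) - 4) := by
      rw [Finset.sum_congr rfl fun i _ => hArow i, Finset.sum_const, Finset.card_univ,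
        Fintype.card_fin, nsmul_eq_mul]
    have h2 : ∑ v, ∑ i, A i u₀ v = 2 * ((Fintype.card (TGV l) : ℚ)) - 2 := by
      rw [Finset.sum_congr rfl fun v _ => hAsum u₀ v]
      rw [Finset.sum_congr rfl (fun v _ => by by_cases h : u₀ = v <;> simp [h] :
        ∀ v ∈ Finset.univ, (if u₀ = v then (0:ℚ) else 2)
          = 2 - (if u₀ = v then 2 else 0))]
      rw [Finset.sum_sub_distrib, Finset.sum_ite_eq, Finset.sum_const, Finset.card_univ]
      simp [nsmul_eq_mul, mul_comm]
    rw [Finset.sum_comm] at h1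
    have hq : (2 * (k:ℚ)) * ((l:ℚ) - 2) = ((l:ℚ) + 1) * ((l:ℚ) - 2) := by
      rw [h2] at h1
      linear_combination hnQ - h1
    have hl2 : ((l:ℚ) - 2) ≠ 0 := by
      have : (5:ℚ) ≤ (l:ℚ) := by exact_mod_cast hl
      linarith
    have hq2 : (2 * (k:ℚ)) = (l:ℚ) + 1 := mul_right_cancel₀ hl2 hq
    exact_mod_cast hq2
  -- linear algebra setup
  let lf : ((TGV l) → ℚ) →ₗ[ℚ] ℚ := ∑ v : TGV l, LinearMap.proj v
  have hlf : ∀ x : (TGV l) → ℚ, lf x = ∑ v, x v := by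
    intro x
    simp [lf, LinearMap.sum_apply, LinearMap.proj_apply]
  let W : Submodule ℚ ((TGV l) → ℚ) := LinearMap.ker lf
  let U : Fin k → Submodule ℚ ((TGV l) → ℚ) := fun i => LinearMap.ker (Matrix.mulVecLin (M i))
  have hMsum : ∀ i (x : TGV l → ℚ), ∑ a, ((M i).mulVec x) a = 2 * ∑ v, x v := by
    intro i x
    simp only [Matrix.mulVec, dotProduct]
    rw [Finset.sum_comm]
    calc ∑ v, ∑ a, M i a v * x v = ∑ v, 2 * x v := by
          refine Finset.sum_congr rfl fun v _ => ?_
          rw [← Finset.sum_mul, hcol]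
      _ = 2 * ∑ v, x v := by rw [Finset.mul_sum]
  have hUW : ∀ i, U i ≤ W := by
    intro i x hx
    have hx' : (M i).mulVec x = 0 := hx
    have h0 : ∑ v, x v = 0 := by
      have hs := hMsum i x
      rw [hx'] at hs
      simp at hs
      linarith
    show lf x = 0
    rw [hlf, h0]
  have hUdim : ∀ i, Fintype.card (TGV l) ≤ Module.finrank ℚ (U i) + l := by
    intro i
    show Fintype.card (TGV l) ≤ Module.finrank ℚ (LinearMap.ker (Matrix.mulVecLin (M i))) + l
    have h1 := LinearMap.finrank_range_add_finrank_ker (Matrix.mulVecLin (M i))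
    rw [Module.finrank_fintype_fun_eq_card] at h1
    have h2 : Module.finrank ℚ (LinearMap.range (Matrix.mulVecLin (M i))) ≤ l := by
      have h3 := Submodule.finrank_le (LinearMap.range (Matrix.mulVecLin (M i)))
      rwa [Module.finrank_fintype_fun_eq_card, Fintype.card_fin] at h3
    omega
  have hWlow : Fintype.card (TGV l) ≤ Module.finrank ℚ W + 1 := by
    show Fintype.card (TGV l) ≤ Module.finrank ℚ (LinearMap.ker lf) + 1
    have h1 := LinearMap.finrank_range_add_finrank_ker lf
    rw [Module.finrank_fintype_fun_eq_card] at h1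
    have h2 : Module.finrank ℚ (LinearMap.range lf) ≤ 1 := by
      have h3 := Submodule.finrank_le (LinearMap.range lf)
      rwa [Module.finrank_self] at h3
    omega
  have hWup : Module.finrank ℚ W < Fintype.card (TGV l) := by
    have hWlt : W < ⊤ := by
      apply lt_of_le_of_ne le_top
      intro hW
      have h1 : (fun _ => (1:ℚ)) ∈ W := by rw [hW]; trivial
      have h2 : lf (fun _ => (1:ℚ)) = 0 := h1
      rw [hlf] at h2
      rw [Finset.sum_const, Finset.card_univ, nsmul_eq_mul, mul_one] at h2
      have h3 : Fintype.card (TGV l) = 0 := by exact_mod_cast h2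
      omega
    have h4 := Submodule.finrank_lt (K := ℚ) (V := (TGV l) → ℚ) hWlt.ne
    rwa [Module.finrank_fintype_fun_eq_card] at h4
  -- dimension count by induction
  have key : ∀ s : Finset (Fin k),
      Fintype.card (TGV l) ≤ Module.finrank ℚ ↥(W ⊓ ⨅ i ∈ s, U i) + s.card * (l - 1) + 1 := by
    intro s
    induction s using Finset.induction_on with
    | empty =>
        have hemp : (⨅ i ∈ (∅ : Finset (Fin k)), U i) = ⊤ := by simp
        rw [hemp, inf_top_eq, Finset.card_empty, Nat.zero_mul]
        exact hWlow
    | @insert j s hj ih =>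
      have hQ : W ⊓ ⨅ i ∈ insert j s, U i = U j ⊓ (W ⊓ ⨅ i ∈ s, U i) := by
        rw [Finset.iInf_insert, inf_left_comm]
      rw [hQ, Finset.card_insert_of_notMem hj, add_mul, one_mul]

      have h1 := Submodule.finrank_sup_add_finrank_inf_eq (U j) (W ⊓ ⨅ i ∈ s, U i)
      have h2 : Module.finrank ℚ ↥(U j ⊔ (W ⊓ ⨅ i ∈ s, U i)) ≤ Module.finrank ℚ W :=
        Submodule.finrank_mono (sup_le (hUW j) inf_le_left)
      have h3 := hUdim j
      have harith : ∀ (n fI fS fU fQ fW c : ℕ), n ≤ fQ + c + 1 → fS + fI = fU + fQ →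
          fS ≤ fW → fW < n → n ≤ fU + l → n ≤ fI + (c + (l-1)) + 1 := by
        intro n fI fS fU fQ fW c a1 a2 a3 a4 a5; omega
      exact harith _ _ _ _ _ _ _ ih h1 h2 hWup h3
  have hk3 : 3 ≤ k := by omega
  let j₀ : Fin k := ⟨0, by omega⟩
  have hcard_erase : (Finset.univ.erase j₀).card = k - 1 := by
    rw [Finset.card_erase_of_mem (Finset.mem_univ _), Finset.card_univ, Fintype.card_fin]
  have hfin : 1 ≤ Module.finrank ℚ ↥(W ⊓ ⨅ i ∈ Finset.univ.erase j₀, U i) := by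
    have h := key (Finset.univ.erase j₀)
    rw [hcard_erase] at h
    have e1 : 2 * ((k-1) * (l-1)) = (l-1)*(l-1) := by
      have h21 : 2 * (k-1) = l - 1 := by omega
      rw [← mul_assoc, h21]
    have e2 : l * (l-1) = (l-1)*(l-1) + (l-1) := by
      have h11 : (l-1) + 1 = l := by omega
      calc l * (l-1) = ((l-1)+1) * (l-1) := by rw [h11]
        _ = (l-1)*(l-1) + (l-1) := by ring
    have harith : ∀ (F n a b c : ℕ), n ≤ F + a + 1 → 2*a = b → c = b + (l-1) →
        2*n = c → 1 ≤ F := by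
      intro F n a b c a1 a2 a3 a4; omega
    exact harith _ _ _ _ _ h e1 e2 h2n
  have hne_bot : W ⊓ ⨅ i ∈ Finset.univ.erase j₀, U i ≠ ⊥ := by
    intro hbot
    rw [hbot] at hfin
    simp at hfin
  obtain ⟨x, hxmem, hx0⟩ := (Submodule.ne_bot_iff _).mp hne_bot
  have hxW : ∑ v, x v = 0 := by
    have h1 : x ∈ W := (Submodule.mem_inf.mp hxmem).1
    have h2 : lf x = 0 := h1
    rwa [hlf] at h2
  have hxU : ∀ i, i ≠ j₀ → (M i).mulVec x = 0 := by
    intro i hi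
    have h1 := (Submodule.mem_inf.mp hxmem).2
    simp only [Submodule.mem_iInf] at h1
    exact h1 i (Finset.mem_erase.mpr ⟨hi, Finset.mem_univ _⟩)
  have hAx : ∀ i, i ≠ j₀ → (A i).mulVec x = -((2:ℚ) • x) := by
    intro i hi
    have h := congrArg (fun N : Matrix (TGV l) (TGV l) ℚ => N.mulVec x) (hMtM i)
    rw [← Matrix.mulVec_mulVec, hxU i hi, Matrix.mulVec_zero] at h
    rw [Matrix.add_mulVec, Matrix.smul_mulVec, Matrix.one_mulVec] at h
    exact eq_neg_of_add_eq_zero_left h.symm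
  have hsumAx : ∑ i, (A i).mulVec x = -((2:ℚ) • x) := by
    funext u
    rw [Finset.sum_apply]
    simp only [Matrix.mulVec, dotProduct]
    rw [Finset.sum_comm]
    have hstep : ∀ v, ∑ i, A i u v * x v = (if u = v then (0:ℚ) else 2) * x v :=
      fun v => by rw [← Finset.sum_mul, hAsum]
    rw [Finset.sum_congr rfl fun v _ => hstep v]
    have hstep2 : ∀ v, (if u = v then (0:ℚ) else 2) * x v
        = 2 * x v - (if u = v then 2 * x v else 0) :=
      fun v => by by_cases h : u = v <;> simp [h]
    rw [Finset.sum_congr rfl fun v _ => hstep2 v, Finset.sum_sub_distrib, ← Finset.mul_sum,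
      hxW, Finset.sum_ite_eq]
    simp
  have hAj₀x : (A j₀).mulVec x = ((l:ℚ) - 3) • x := by
    have hsplit : ∑ i ∈ Finset.univ.erase j₀, (A i).mulVec x + (A j₀).mulVec x
        = ∑ i, (A i).mulVec x := Finset.sum_erase_add _ _ (Finset.mem_univ j₀)
    rw [Finset.sum_congr rfl (fun i hi => hAx i (Finset.mem_erase.mp hi).1),
      Finset.sum_const, hcard_erase, hsumAx] at hsplit
    rw [← Nat.cast_smul_eq_nsmul ℚ] at hsplit
    have hkQ2 : 2 * ((k - 1 : ℕ) : ℚ) = (l:ℚ) - 1 := by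
      have hc : ((k - 1 : ℕ) : ℚ) = (k:ℚ) - 1 := by
        rw [Nat.cast_sub (by omega)]; norm_num
      have hkq : 2 * (k:ℚ) = (l:ℚ) + 1 := by exact_mod_cast hk
      rw [hc]; linarith
    funext u
    have hu := congrFun hsplit u
    simp only [Pi.add_apply, Pi.smul_apply, Pi.neg_apply, smul_eq_mul] at hu ⊢
    linear_combination hu + x u * hkQ2
  have hMtMx : ((M j₀)ᵀ * M j₀).mulVec x = ((l:ℚ) - 1) • x := by
    rw [hMtM j₀, Matrix.add_mulVec, Matrix.smul_mulVec, Matrix.one_mulVec, hAj₀x,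
      ← add_smul]
    congr 1
    ring
  have hysum : ∑ a, ((M j₀).mulVec x) a = 0 := by
    have hs := hMsum j₀ x
    rw [hxW, mul_zero] at hs
    exact hs
  have hMty : ((M j₀)ᵀ).mulVec ((M j₀).mulVec x) = ((l:ℚ) - 1) • x := by
    rw [Matrix.mulVec_mulVec]
    exact hMtMx
  have hMy : (M j₀ * (M j₀)ᵀ).mulVec ((M j₀).mulVec x)
      = ((l:ℚ) - 1) • ((M j₀).mulVec x) := by
    rw [← Matrix.mulVec_mulVec, hMty, Matrix.mulVec_smul]
  have hyz : (M j₀).mulVec x = 0 := by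
    funext a
    have h1 := congrFun hMy a
    have h2 : ((M j₀ * (M j₀)ᵀ).mulVec ((M j₀).mulVec x)) a
        = ((l:ℚ) - 2) * ((M j₀).mulVec x) a := by
      simp only [Matrix.mulVec, dotProduct]
      have hstep : ∀ b, (M j₀ * (M j₀)ᵀ) a b * ((M j₀).mulVec x) b
          = ((M j₀).mulVec x) b
            + (if a = b then ((l:ℚ) - 2) * ((M j₀).mulVec x) b else 0) := by
        intro b
        rw [show (M j₀ * (M j₀)ᵀ) a b = if a = b then (l:ℚ) - 1 else 1 from hMMt j₀ a b]
        by_cases h : a = b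
        · rw [if_pos h, if_pos h]; ring
        · rw [if_neg h, if_neg h]; ring
      calc ∑ b, (M j₀ * (M j₀)ᵀ) a b * ((M j₀).mulVec x) b
          = ∑ b, (((M j₀).mulVec x) b
            + (if a = b then ((l:ℚ) - 2) * ((M j₀).mulVec x) b else 0)) :=
            Finset.sum_congr rfl fun b _ => hstep b
        _ = (∑ b, ((M j₀).mulVec x) b)
            + ∑ b, (if a = b then ((l:ℚ) - 2) * ((M j₀).mulVec x) b else 0) :=
            Finset.sum_add_distrib
        _ = ((l:ℚ) - 2) * ((M j₀).mulVec x) a := by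
            rw [hysum, Finset.sum_ite_eq]
            simp
    rw [h2] at h1
    simp only [Pi.smul_apply, smul_eq_mul] at h1
    have h3 : ((M j₀).mulVec x) a = 0 := by linear_combination -h1
    simpa using h3
  have hxz : x = 0 := by
    have h1 : ((l:ℚ) - 1) • x = 0 := by rw [← hMty, hyz, Matrix.mulVec_zero]
    have h2 : ((l:ℚ) - 1) ≠ 0 := by
      have h5 : (5:ℚ) ≤ (l:ℚ) := by exact_mod_cast hl
      linarith
    exact (smul_eq_zero.mp h1).resolve_left h2
  exact hx0 hxz
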